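/- Let c : ℕ × ℕ → ℂ be a phase matrix of rank one, in the sense that c_{n,m} c_{k,l} = c_{n,l} c_{k,m} for all n, m, k, l ∈ ℕ. Then there exists a sequence z : ℕ → ℂ with |z_n| = 1 for all n such that c_{n,m} = conj(z_n) z_m for all n, m ∈ ℕ. -/

import Mathlib

open scoped ComplexConjugate ComplexOrder

/-- A phase matrix: a positive semidefinite matrix `c : ℕ × ℕ → ℂ` with unit diagonal. -/
def IsPhaseMatrix (c : ℕ → ℕ → ℂ) : Prop :=
  (∀ a : ℕ →₀ ℂ, 0 ≤ a.sum fun n an => a.sum fun m am => conj an * c n m * am) ∧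
  (∀ n : ℕ, c n n = 1)

lemma phase_quad (c : ℕ → ℕ → ℂ) (hc : IsPhaseMatrix c) {n m : ℕ} (hnm : n ≠ m)
    (y : ℂ) :
    0 ≤ 1 + c n m * y + conj y * c m n + conj y * y * 1 := by
  obtain ⟨hpos, hdiag⟩ := hc
  have h := hpos (Finsupp.single n 1 + Finsupp.single m y)
  have e1 : ∀ (k : ℕ) (v : ℂ),
      ((Finsupp.single n 1 + Finsupp.single m y).sum fun j aj => conj v * c k j * aj)
        = conj v * c k n * 1 + conj v * c k m * y := by
    intro k v
    rw [Finsupp.sum_add_index' (by intro i; ring) (by intros; ring),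
      Finsupp.sum_single_index (by ring), Finsupp.sum_single_index (by ring)]
  simp only [e1] at h
  rw [Finsupp.sum_add_index' (by intro i; simp) (by intros; simp [map_add]; ring),
    Finsupp.sum_single_index (by simp), Finsupp.sum_single_index (by simp)] at h
  simpa [hdiag, mul_comm, mul_assoc, mul_left_comm, add_comm, add_assoc, add_left_comm]
    using h

lemma phase_herm (c : ℕ → ℕ → ℂ) (hc : IsPhaseMatrix c) (n m : ℕ) :
    c m n = conj (c n m) := by
  rcases eq_or_ne n m with rfl | hnm
  · simp [hc.2 n]
  · have h1 := phase_quad c hc hnm 1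
    have h2 := phase_quad c hc hnm Complex.I
    rw [Complex.le_def] at h1 h2
    have h1' := h1.2
    have h2' := h2.2
    simp [Complex.ext_iff, Complex.add_im, Complex.mul_im, Complex.mul_re] at h1' h2' ⊢
    constructor <;> linarith

theorem rank_one_phase_matrix
    (c : ℕ → ℕ → ℂ) (hc : IsPhaseMatrix c)
    (hrank : ∀ n m k l : ℕ, c n m * c k l = c n l * c k m) :
    ∃ z : ℕ → ℂ, (∀ n, ‖z n‖ = 1) ∧
      ∀ n m : ℕ, c n m = conj (z n) * z m := by
  refine ⟨fun n => c 0 n, fun n => ?_, fun n m => ?_⟩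
  · have h := hrank n n 0 0
    rw [hc.2 n, hc.2 0, one_mul, phase_herm c hc n 0, Complex.mul_conj] at h
    have hns : Complex.normSq (c n 0) = 1 := by exact_mod_cast h.symm
    have habs : ‖c n 0‖ = 1 := by
      have hsq := Complex.sq_norm (c n 0)
      nlinarith [norm_nonneg (c n 0)]
    show ‖c 0 n‖ = 1
    rw [phase_herm c hc n 0, Complex.norm_conj]
    exact habs
  · show c n m = conj (c 0 n) * c 0 m
    have h := hrank n 0 0 m
    rw [hc.2 0, mul_one] at h
    rw [← h, phase_herm c hc 0 n]
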